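/- arXiv:1201.1548 — 7 statements merged into one kernel-verified Lean document; each statement's English description precedes it below -/
import Mathlib

section
/- Let p ∈ ℂ[X] be a polynomial, let m ∈ ℂ, let r > 0 be a real number, and let K ≥ √2 be a real constant. If the test T^{p'}_K(m,r) holds for the derivative p' of p, i.e. |p'(m)| − K·Σ_{k≥1} (|p'^{(k)}(m)|/k!)·r^k > 0, then the closed disc {z ∈ ℂ : |z − m| ≤ r} contains at most one root of p, and any root of p in this disc is a simple root. -/
open Polynomial

/-- The test `T^p_K(m,r)`: `|p(m)| − K·Σ_{k=1}^{deg p} (|p^{(k)}(m)|/k!)·r^k > 0`. -/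
def testT (p : Polynomial ℂ) (m : ℂ) (r K : ℝ) : Prop :=
  0 < ‖p.eval m‖ -
      K * ∑ k ∈ Finset.Icc 1 p.natDegree,
        (‖(Polynomial.derivative^[k] p).eval m‖ / (Nat.factorial k)) * r ^ k

lemma abs_taylor_coeff (p : Polynomial ℂ) (m : ℂ) (k : ℕ) :
    ‖(Polynomial.taylor m p).coeff k‖
      = ‖(Polynomial.derivative^[k] p).eval m‖ / (Nat.factorial k) := by
  have h : (Polynomial.derivative^[k] p).eval m
      = (k.factorial : ℂ) * ((Polynomial.taylor m p).coeff k) := by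
    rw [Polynomial.taylor_coeff, ← Polynomial.factorial_smul_hasseDeriv]
    simp [nsmul_eq_mul]
  rw [h, norm_mul, Complex.norm_natCast, mul_div_cancel_left₀]
  exact_mod_cast (Nat.factorial_ne_zero k)

lemma eval_eq_taylor_sum (q : Polynomial ℂ) (m z : ℂ) :
    q.eval z = ∑ k ∈ Finset.range (q.natDegree + 1),
      (Polynomial.taylor m q).coeff k * (z - m) ^ k := by
  conv_lhs => rw [← Polynomial.taylor_eval_sub m q z]
  rw [Polynomial.eval_eq_sum_range, Polynomial.natDegree_taylor]

lemma taylor_tail_bound (q : Polynomial ℂ) (m z : ℂ) (r : ℝ)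
    (hz : ‖z - m‖ ≤ r) :
    ‖q.eval z - q.eval m‖ ≤
      ∑ k ∈ Finset.Icc 1 q.natDegree,
        (‖(Polynomial.derivative^[k] q).eval m‖ / (Nat.factorial k)) * r ^ k := by
  have hset : Finset.range (q.natDegree + 1) = insert 0 (Finset.Icc 1 q.natDegree) := by
    ext x
    simp only [Finset.mem_range, Finset.mem_insert, Finset.mem_Icc]
    omega
  have h0 : (Polynomial.taylor m q).coeff 0 = q.eval m := Polynomial.taylor_coeff_zero m q
  have hsplit : q.eval z - q.eval m
      = ∑ k ∈ Finset.Icc 1 q.natDegree, (Polynomial.taylor m q).coeff k * (z - m) ^ k := by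
    rw [eval_eq_taylor_sum q m z, hset, Finset.sum_insert (by simp), h0, pow_zero, mul_one,
      add_sub_cancel_left]
  rw [hsplit]
  refine (norm_sum_le _ _).trans (Finset.sum_le_sum fun k _ => ?_)
  rw [norm_mul, norm_pow, abs_taylor_coeff]
  exact mul_le_mul_of_nonneg_left (pow_le_pow_left₀ (norm_nonneg _) hz k)
    (by positivity)

theorem at_most_one_root_in_closed_disc_of_testT_derivative (p : Polynomial ℂ) (m : ℂ)
    (r : ℝ) (hr : 0 < r) (K : ℝ) (hK : Real.sqrt 2 ≤ K)
    (hT : testT (Polynomial.derivative p) m r K) :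
    (∀ z₁ z₂ : ℂ, ‖z₁ - m‖ ≤ r → ‖z₂ - m‖ ≤ r →
      p.eval z₁ = 0 → p.eval z₂ = 0 → z₁ = z₂) ∧
    (∀ z : ℂ, ‖z - m‖ ≤ r → p.eval z = 0 →
      Polynomial.rootMultiplicity z p = 1) := by
  have hS : ∀ S : ℝ, S = ∑ k ∈ Finset.Icc 1 (Polynomial.derivative p).natDegree,
      (‖(Polynomial.derivative^[k] (Polynomial.derivative p)).eval m‖
        / (Nat.factorial k)) * r ^ k → True := fun _ _ => trivial
  set S : ℝ := ∑ k ∈ Finset.Icc 1 (Polynomial.derivative p).natDegree,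
      (‖(Polynomial.derivative^[k] (Polynomial.derivative p)).eval m‖
        / (Nat.factorial k)) * r ^ k with hSdef
  have hK1 : (1 : ℝ) ≤ K := by
    refine le_trans ?_ hK
    rw [show (1:ℝ) = Real.sqrt 1 from Real.sqrt_one.symm]
    exact Real.sqrt_le_sqrt (by norm_num)
  have hS0 : 0 ≤ S := by
    refine Finset.sum_nonneg fun k _ => ?_
    positivity
  have habs : K * S < ‖(Polynomial.derivative p).eval m‖ := by
    have h := hT
    unfold testT at h
    linarith [h]
  have hSlt : S < ‖(Polynomial.derivative p).eval m‖ :=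
    lt_of_le_of_lt (le_mul_of_one_le_left hS0 hK1) habs
  have hp'm : (Polynomial.derivative p).eval m ≠ 0 := by
    intro h
    rw [h, norm_zero] at habs
    nlinarith
  have hp'ne : Polynomial.derivative p ≠ 0 := fun h => hp'm (by simp [h])
  have hpne : p ≠ 0 := fun h => hp'ne (by simp [h])
  have hn : p.natDegree ≠ 0 := fun h => hp'ne (Polynomial.derivative_of_natDegree_zero h)
  have hderiv_ne : ∀ z : ℂ, ‖z - m‖ ≤ r → (Polynomial.derivative p).eval z ≠ 0 := by
    intro z hz h
    have hb := taylor_tail_bound (Polynomial.derivative p) m z r hz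
    rw [h, zero_sub, norm_neg] at hb
    exact absurd hb (not_le.mpr hSlt)
  constructor
  · -- uniqueness
    intro z₁ z₂ h1 h2 e1 e2
    by_contra hne
    have hvu : (z₂ - m) - (z₁ - m) ≠ 0 := by
      intro h
      apply hne
      have : z₁ = z₂ := by linear_combination -h
      exact this
    have hgeom : ∀ k : ℕ,
        (∑ j ∈ Finset.range k, (z₂ - m) ^ j * (z₁ - m) ^ (k - 1 - j))
          * ((z₂ - m) - (z₁ - m)) = (z₂ - m) ^ k - (z₁ - m) ^ k :=
      fun k => geom_sum₂_mul _ _ k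
    have hD0 : (∑ k ∈ Finset.range (p.natDegree + 1), (Polynomial.taylor m p).coeff k *
        ∑ j ∈ Finset.range k, (z₂ - m) ^ j * (z₁ - m) ^ (k - 1 - j)) = 0 := by
      have hmul : (∑ k ∈ Finset.range (p.natDegree + 1), (Polynomial.taylor m p).coeff k *
          ∑ j ∈ Finset.range k, (z₂ - m) ^ j * (z₁ - m) ^ (k - 1 - j))
            * ((z₂ - m) - (z₁ - m)) = 0 := by
        rw [Finset.sum_mul]
        have heach : ∀ k ∈ Finset.range (p.natDegree + 1),
            (Polynomial.taylor m p).coeff k *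
              (∑ j ∈ Finset.range k, (z₂ - m) ^ j * (z₁ - m) ^ (k - 1 - j))
                * ((z₂ - m) - (z₁ - m))
            = (Polynomial.taylor m p).coeff k * (z₂ - m) ^ k
              - (Polynomial.taylor m p).coeff k * (z₁ - m) ^ k := by
          intro k _
          rw [mul_assoc, hgeom k, mul_sub]
        rw [Finset.sum_congr rfl heach, Finset.sum_sub_distrib,
          ← eval_eq_taylor_sum p m z₂, ← eval_eq_taylor_sum p m z₁, e1, e2, sub_zero]
      exact (mul_eq_zero.mp hmul).resolve_right hvu
    have h1mem : 1 ∈ Finset.range (p.natDegree + 1) := by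
      simp only [Finset.mem_range]
      omega
    have hg1 : (∑ j ∈ Finset.range 1, (z₂ - m) ^ j * (z₁ - m) ^ (1 - 1 - j)) = 1 := by simp
    have hc1 : (Polynomial.taylor m p).coeff 1
        = -∑ k ∈ (Finset.range (p.natDegree + 1)).erase 1, (Polynomial.taylor m p).coeff k *
            ∑ j ∈ Finset.range k, (z₂ - m) ^ j * (z₁ - m) ^ (k - 1 - j) := by
      have h := Finset.add_sum_erase _ (fun k => (Polynomial.taylor m p).coeff k *
        ∑ j ∈ Finset.range k, (z₂ - m) ^ j * (z₁ - m) ^ (k - 1 - j)) h1mem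
      rw [hD0] at h
      simp only [hg1, mul_one] at h
      linear_combination h
    have hgbound : ∀ k : ℕ,
        ‖∑ j ∈ Finset.range k, (z₂ - m) ^ j * (z₁ - m) ^ (k - 1 - j)‖
          ≤ (k : ℝ) * r ^ (k - 1) := by
      intro k
      refine (norm_sum_le _ _).trans ?_
      have hterm : ∀ j ∈ Finset.range k,
          ‖(z₂ - m) ^ j * (z₁ - m) ^ (k - 1 - j)‖ ≤ r ^ (k - 1) := by
        intro j hj
        rw [norm_mul, norm_pow, norm_pow]
        have hv' : ‖z₂ - m‖ ^ j ≤ r ^ j :=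
          pow_le_pow_left₀ (norm_nonneg _) h2 j
        have hu' : ‖z₁ - m‖ ^ (k - 1 - j) ≤ r ^ (k - 1 - j) :=
          pow_le_pow_left₀ (norm_nonneg _) h1 _
        calc ‖z₂ - m‖ ^ j * ‖z₁ - m‖ ^ (k - 1 - j)
            ≤ r ^ j * r ^ (k - 1 - j) :=
              mul_le_mul hv' hu' (by positivity) (by positivity)
          _ = r ^ (k - 1) := by
              rw [← pow_add]
              congr 1
              have := Finset.mem_range.mp hj
              omega
      refine (Finset.sum_le_sum hterm).trans ?_
      rw [Finset.sum_const, Finset.card_range, nsmul_eq_mul]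
    have hbound : ‖(Polynomial.taylor m p).coeff 1‖ ≤ S := by
      rw [hc1, norm_neg]
      refine (norm_sum_le _ _).trans ?_
      have step1 : ∑ k ∈ (Finset.range (p.natDegree + 1)).erase 1,
          ‖(Polynomial.taylor m p).coeff k *
            ∑ j ∈ Finset.range k, (z₂ - m) ^ j * (z₁ - m) ^ (k - 1 - j)‖
          ≤ ∑ k ∈ (Finset.range (p.natDegree + 1)).erase 1,
            (‖(Polynomial.derivative^[k] p).eval m‖ / (Nat.factorial k))
              * ((k : ℝ) * r ^ (k - 1)) := by
        refine Finset.sum_le_sum fun k _ => ?_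
        rw [norm_mul, abs_taylor_coeff]
        exact mul_le_mul_of_nonneg_left (hgbound k) (by positivity)
      refine step1.trans ?_
      have hset : (Finset.range (p.natDegree + 1)).erase 1
          = insert 0 (Finset.Icc 2 p.natDegree) := by
        ext x
        simp only [Finset.mem_erase, Finset.mem_range, Finset.mem_insert, Finset.mem_Icc]
        omega
      rw [hset, Finset.sum_insert (by simp)]
      simp only [Nat.cast_zero, zero_mul, mul_zero, zero_add]
      have hre : ∑ k ∈ Finset.Icc 2 p.natDegree,
          (‖(Polynomial.derivative^[k] p).eval m‖ / (Nat.factorial k))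
            * ((k : ℝ) * r ^ (k - 1))
          = ∑ j ∈ Finset.Icc 1 (p.natDegree - 1),
            (‖(Polynomial.derivative^[j] (Polynomial.derivative p)).eval m‖
              / (Nat.factorial j)) * r ^ j := by
        refine Finset.sum_nbij' (fun k => k - 1) (fun j => j + 1) ?_ ?_ ?_ ?_ ?_
        · intro a ha
          simp only [Finset.mem_Icc] at ha ⊢
          omega
        · intro a ha
          simp only [Finset.mem_Icc] at ha ⊢
          omega
        · intro a ha
          simp only [Finset.mem_Icc] at ha
          show a - 1 + 1 = a
          omega
        · intro a ha
          simp only [Finset.mem_Icc] at ha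
          show a + 1 - 1 = a
          omega
        · intro k hk
          simp only [Finset.mem_Icc] at hk
          obtain ⟨j, rfl⟩ : ∃ j, k = j + 1 := ⟨k - 1, by omega⟩
          rw [Function.iterate_succ_apply]
          simp only [Nat.add_sub_cancel]
          rw [Nat.factorial_succ]
          have hjf : (0:ℝ) < (Nat.factorial j : ℝ) := by exact_mod_cast (Nat.factorial_pos j)
          push_cast
          field_simp
      rw [hre, hSdef]
      refine le_of_eq (Finset.sum_subset ?_ ?_).symm
      · apply Finset.Icc_subset_Icc_right
        exact Polynomial.natDegree_derivative_le p
      · intro x hx hnx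
        simp only [Finset.mem_Icc] at hx hnx
        have hgt : (Polynomial.derivative p).natDegree < x := by omega
        rw [Polynomial.iterate_derivative_eq_zero hgt]
        simp
    rw [Polynomial.taylor_coeff_one] at hbound
    exact absurd hbound (not_le.mpr hSlt)
  · -- simple roots
    intro z hz h0
    have hmul1 : 0 < p.rootMultiplicity z := (Polynomial.rootMultiplicity_pos hpne).mpr h0
    have hmul2 : ¬ 1 < p.rootMultiplicity z := by
      intro hlt
      exact hderiv_ne z hz ((Polynomial.one_lt_rootMultiplicity_iff_isRoot hpne).mp hlt).2
    omega
end

section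
/- Let p ∈ ℂ[X] be a polynomial and let K ⊆ ℂ be a convex set. Suppose there exists a nonzero w ∈ ℂ such that for every z ∈ K the derivative p'(z) is nonzero and the angle between p'(z) and w is strictly less than π/4. Then p has at most one root in K. -/
open Polynomial

theorem at_most_one_root_in_convex_set_of_derivative_angle_lt_pi_div_four
    (p : Polynomial ℂ) (K : Set ℂ) (hK : Convex ℝ K)
    (hw : ∃ w : ℂ, w ≠ 0 ∧ ∀ z ∈ K, (Polynomial.derivative p).eval z ≠ 0 ∧
      |Complex.arg ((Polynomial.derivative p).eval z / w)| < Real.pi / 4) :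
    ∀ z₁ ∈ K, ∀ z₂ ∈ K, p.eval z₁ = 0 → p.eval z₂ = 0 → z₁ = z₂ := by
  obtain ⟨w, hw0, hcond⟩ := hw
  intro z₁ hz₁ z₂ hz₂ h1 h2
  by_contra hne
  set Δ : ℂ := z₂ - z₁ with hΔ
  have hΔ0 : Δ ≠ 0 := sub_ne_zero.mpr (Ne.symm hne)
  set f : ℝ → ℝ := fun t => (p.eval (z₁ + (t:ℂ) * Δ) / (w * Δ)).re with hf
  have hmem : ∀ t ∈ Set.Icc (0:ℝ) 1, z₁ + (t:ℂ) * Δ ∈ K := by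
    intro t ht
    have h := hK hz₁ hz₂ (by linarith [ht.2] : (0:ℝ) ≤ 1 - t) ht.1 (by ring)
    convert h using 1
    simp only [Complex.real_smul, hΔ]
    push_cast
    ring
  have hderiv : ∀ t ∈ Set.Icc (0:ℝ) 1,
      HasDerivAt f (((Polynomial.derivative p).eval (z₁ + (t:ℂ) * Δ) / w).re) t := by
    intro t _
    have h1 : HasDerivAt (fun ζ : ℂ => z₁ + ζ * Δ) Δ (t:ℂ) := by
      simpa using ((hasDerivAt_id (t:ℂ)).mul_const Δ).const_add z₁
    have h2 := (p.hasDerivAt (z₁ + (t:ℂ) * Δ)).comp (t:ℂ) h1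
    have h3 : HasDerivAt (fun ζ : ℂ => p.eval (z₁ + ζ * Δ) / (w * Δ))
        ((Polynomial.derivative p).eval (z₁ + (t:ℂ) * Δ) / w) (t:ℂ) := by
      have := h2.div_const (w * Δ)
      convert this using 1
      all_goals first | rfl | field_simp
    have h4 := h3.comp_ofReal
    have h5 := Complex.reCLM.hasFDerivAt.comp_hasDerivAt t (h4.restrictScalars ℝ)
    exact h5
  have hpos : ∀ t ∈ Set.Icc (0:ℝ) 1,
      0 < (((Polynomial.derivative p).eval (z₁ + (t:ℂ) * Δ)) / w).re := by
    intro t ht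
    obtain ⟨hne0, harg⟩ := hcond _ (hmem t ht)
    have hq : (Polynomial.derivative p).eval (z₁ + (t:ℂ) * Δ) / w ≠ 0 :=
      div_ne_zero hne0 hw0
    have : |Complex.arg ((Polynomial.derivative p).eval (z₁ + (t:ℂ) * Δ) / w)| <
        Real.pi / 2 := lt_trans harg (by linarith [Real.pi_pos])
    rcases Complex.abs_arg_lt_pi_div_two_iff.mp this with h | h
    · exact h
    · exact absurd h hq
  have hcont : ContinuousOn f (Set.Icc 0 1) := fun t ht =>
    (hderiv t ht).continuousAt.continuousWithinAt
  have hmono : StrictMonoOn f (Set.Icc 0 1) := by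
    apply strictMonoOn_of_deriv_pos (convex_Icc 0 1) hcont
    intro t ht
    rw [interior_Icc] at ht
    have ht' : t ∈ Set.Icc (0:ℝ) 1 := ⟨le_of_lt ht.1, le_of_lt ht.2⟩
    rw [(hderiv t ht').deriv]
    exact hpos t ht'
  have h01 : f 0 < f 1 := hmono (Set.left_mem_Icc.mpr zero_le_one)
    (Set.right_mem_Icc.mpr zero_le_one) zero_lt_one
  have hf0 : f 0 = 0 := by simp [hf, h1]
  have hf1 : f 1 = 0 := by
    have : z₁ + Δ = z₂ := by rw [hΔ]; ring
    simp [hf, this, h2]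
  rw [hf0, hf1] at h01
  exact lt_irrefl 0 h01
end

section
/- Let R ∈ ℂ[X] be a nonzero polynomial, let m ∈ ℂ and r > 0, and let α be a root of R of multiplicity i₀ with |α − m| ≤ r. Assume that every root β of R with β ≠ α satisfies |β − m| > 8r. Then for every z ∈ ℂ with |z − m| = 2r one has |R(z)| > 2^{−i₀ − deg R}·|R(m − 2r)|. -/
open Polynomial

private lemma aux_prod_le (s : Multiset ℂ) (f g : ℂ → ℝ)
    (h0 : ∀ b ∈ s, 0 ≤ f b) (h : ∀ b ∈ s, f b ≤ g b) :
    (s.map f).prod ≤ (s.map g).prod := by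
  induction s using Multiset.induction with
  | empty => simp
  | cons a s ih =>
    simp only [Multiset.map_cons, Multiset.prod_cons]
    have hf : (0:ℝ) ≤ (s.map f).prod :=
      Multiset.prod_nonneg (by intro x hx; simp only [Multiset.mem_map] at hx
                               obtain ⟨b, hb, rfl⟩ := hx; exact h0 b (by simp [hb]))
    exact mul_le_mul (h a (by simp)) (ih (fun b hb => h0 b (by simp [hb]))
      (fun b hb => h b (by simp [hb]))) hf
      (le_trans (h0 a (by simp)) (h a (by simp)))

private lemma aux_abs_eval (R : Polynomial ℂ) (z : ℂ) :
    ‖R.eval z‖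
      = ‖R.leadingCoeff‖ * ((R.roots.map (fun a => ‖z - a‖)).prod) := by
  conv_lhs => rw [(IsAlgClosed.splits R).eq_prod_roots]
  rw [eval_mul, eval_C, norm_mul]
  congr 1
  rw [eval_multiset_prod, Multiset.map_map]
  refine (map_multiset_prod (normHom (α := ℂ)) _).trans ?_
  rw [Multiset.map_map]
  simp [normHom]

theorem lower_bound_on_circle_of_isolated_root (R : Polynomial ℂ) (hR : R ≠ 0)
    (m : ℂ) (r : ℝ) (hr : 0 < r) (α : ℂ) (i₀ : ℕ)
    (hroot : R.eval α = 0) (hmult : Polynomial.rootMultiplicity α R = i₀)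
    (hnear : ‖α - m‖ ≤ r)
    (hfar : ∀ β : ℂ, R.eval β = 0 → β ≠ α → 8 * r < ‖β - m‖) :
    ∀ z : ℂ, ‖z - m‖ = 2 * r →
      (2 : ℝ) ^ (-(i₀ : ℤ) - (R.natDegree : ℤ)) * ‖R.eval (m - (2 * r : ℝ))‖ <
        ‖R.eval z‖ := by
  intro z hz
  classical
  set w : ℂ := m - (2 * r : ℝ) with hwdef
  have hw : ‖w - m‖ = 2 * r := by
    have : w - m = -((2 * r : ℝ) : ℂ) := by rw [hwdef]; ring
    rw [this, norm_neg, Complex.norm_real, Real.norm_eq_abs, abs_of_pos (by linarith)]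
  have hi₀ : 1 ≤ i₀ := by
    rw [← hmult]
    exact (rootMultiplicity_pos hR).mpr hroot
  -- decompose the roots
  set s : Multiset ℂ := R.roots.filter (fun b => ¬ α = b) with hsdef
  have hsplit : R.roots.filter (Eq α) + s = R.roots := Multiset.filter_add_not _ _
  have hrep : R.roots.filter (Eq α) = Multiset.replicate i₀ α := by
    rw [Multiset.filter_eq, count_roots, hmult]
  have hcard : Multiset.card R.roots = R.natDegree :=
    splits_iff_card_roots.1 (IsAlgClosed.splits R)
  have hk : i₀ + Multiset.card s = R.natDegree := by
    have := congrArg Multiset.card hsplit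
    simpa [hrep, hcard] using this
  set k := Multiset.card s with hkdef
  -- product decomposition
  have hprod : ∀ x : ℂ, (R.roots.map (fun a => ‖x - a‖)).prod
      = ‖x - α‖ ^ i₀ * ((s.map (fun a => ‖x - a‖)).prod) := by
    intro x
    conv_lhs => rw [← hsplit]
    rw [Multiset.map_add, Multiset.prod_add, hrep, Multiset.map_replicate,
      Multiset.prod_replicate]
  have hevalw := aux_abs_eval R w
  have hevalz := aux_abs_eval R z
  rw [hprod] at hevalw hevalz
  set L := ‖R.leadingCoeff‖ with hLdef
  have hL : 0 < L := norm_pos_iff.mpr (leadingCoeff_ne_zero.mpr hR)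
  -- bounds for the α factor
  have hzα : r ≤ ‖z - α‖ := by
    have h1 : ‖z - m‖ ≤ ‖z - α‖ + ‖α - m‖ := by
      have : z - m = (z - α) + (α - m) := by ring
      rw [this]; exact norm_add_le _ _
    linarith [hz ▸ h1]
  have hwα : ‖w - α‖ ≤ 3 * r := by
    have h1 : ‖w - α‖ ≤ ‖w - m‖ + ‖α - m‖ := by
      have : w - α = (w - m) - (α - m) := by ring
      rw [this]; exact norm_sub_le _ _
    linarith [hw ▸ h1]
  -- bounds for the other factors
  have hmem : ∀ b ∈ s, 6 * r < ‖z - b‖ ∧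
      ‖w - b‖ ≤ 2 * ‖z - b‖ := by
    intro b hb
    rw [hsdef, Multiset.mem_filter] at hb
    obtain ⟨hb1, hb2⟩ := hb
    have hbroot : R.eval b = 0 := (mem_roots hR).1 hb1
    have hbig : 8 * r < ‖b - m‖ := hfar b hbroot (fun h => hb2 (h ▸ rfl))
    have h1 : ‖b - m‖ ≤ ‖z - b‖ + ‖z - m‖ := by
      have : b - m = -(z - b) + (z - m) := by ring
      rw [this]
      calc ‖-(z - b) + (z - m)‖ ≤ ‖-(z-b)‖ + ‖z - m‖ :=
            norm_add_le _ _
        _ = ‖z - b‖ + ‖z - m‖ := by rw [norm_neg]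
    have hz1 : 6 * r < ‖z - b‖ := by rw [hz] at h1; linarith
    have h2 : ‖w - b‖ ≤ ‖b - m‖ + ‖w - m‖ := by
      have : w - b = -(b - m) + (w - m) := by ring
      rw [this]
      calc ‖-(b - m) + (w - m)‖ ≤ ‖-(b-m)‖ + ‖w - m‖ :=
            norm_add_le _ _
        _ = ‖b - m‖ + ‖w - m‖ := by rw [norm_neg]
    have h3 : ‖b - m‖ ≤ ‖z - b‖ + ‖z - m‖ := h1
    rw [hw] at h2; rw [hz] at h3
    exact ⟨hz1, by linarith⟩
  set A := (s.map (fun a => ‖w - a‖)).prod with hAdef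
  set B := (s.map (fun a => ‖z - a‖)).prod with hBdef
  have hB : 0 < B :=
    Multiset.prod_pos (by intro x hx; simp only [Multiset.mem_map] at hx
                          obtain ⟨b, hb, rfl⟩ := hx
                          linarith [(hmem b hb).1])
  have hAB : A ≤ 2 ^ k * B := by
    have h1 : A ≤ (s.map (fun a => 2 * ‖z - a‖)).prod :=
      aux_prod_le s _ _ (fun b _ => norm_nonneg _) (fun b hb => (hmem b hb).2)
    have h2 : (s.map (fun a => 2 * ‖z - a‖)).prod = 2 ^ k * B := by
      rw [show (fun a => 2 * ‖z - a‖) = (fun a => (fun _ : ℂ => (2:ℝ)) a * (fun a => ‖z - a‖) a) from rfl,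
        Multiset.prod_map_mul]
      congr 1
      rw [Multiset.map_const', Multiset.prod_replicate]
    exact h1.trans (le_of_eq h2)
  -- main strict inequality
  have hmain : ‖R.eval w‖ < 2 ^ (i₀ + R.natDegree) * ‖R.eval z‖ := by
    rw [hevalw, hevalz]
    have hA : 0 ≤ A := Multiset.prod_nonneg (by
      intro x hx; simp only [Multiset.mem_map] at hx
      obtain ⟨b, hb, rfl⟩ := hx; exact norm_nonneg _)
    have step1 : L * (‖w - α‖ ^ i₀ * A) ≤ L * ((3 * r) ^ i₀ * (2 ^ k * B)) := by
      gcongr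
    have step2 : (3 * r) ^ i₀ < 4 ^ i₀ * r ^ i₀ := by
      rw [← mul_pow]
      exact pow_lt_pow_left₀ (by linarith) (by linarith) (by omega)
    have step3 : L * ((3 * r) ^ i₀ * (2 ^ k * B)) < L * ((4 ^ i₀ * r ^ i₀) * (2 ^ k * B)) := by
      apply mul_lt_mul_of_pos_left _ hL
      apply mul_lt_mul_of_pos_right step2 (by positivity)
    have step4 : L * ((4 ^ i₀ * r ^ i₀) * (2 ^ k * B))
        ≤ 2 ^ (i₀ + R.natDegree) * (L * (‖z - α‖ ^ i₀ * B)) := by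
      have hpow : (2:ℝ) ^ (i₀ + R.natDegree) = 4 ^ i₀ * 2 ^ k := by
        rw [← hk]
        rw [show i₀ + (i₀ + k) = 2 * i₀ + k from by ring, pow_add, pow_mul]
        norm_num
      rw [hpow]
      have : r ^ i₀ ≤ ‖z - α‖ ^ i₀ :=
        pow_le_pow_left₀ (le_of_lt hr) hzα i₀
      calc L * ((4 ^ i₀ * r ^ i₀) * (2 ^ k * B))
          ≤ L * ((4 ^ i₀ * ‖z - α‖ ^ i₀) * (2 ^ k * B)) := by gcongr
        _ = 4 ^ i₀ * 2 ^ k * (L * (‖z - α‖ ^ i₀ * B)) := by ring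
    calc L * (‖w - α‖ ^ i₀ * A)
        ≤ L * ((3 * r) ^ i₀ * (2 ^ k * B)) := step1
      _ < L * ((4 ^ i₀ * r ^ i₀) * (2 ^ k * B)) := step3
      _ ≤ 2 ^ (i₀ + R.natDegree) * (L * (‖z - α‖ ^ i₀ * B)) := step4
  -- conclude
  have hpow : (2:ℝ) ^ (-(i₀ : ℤ) - (R.natDegree : ℤ)) = ((2:ℝ) ^ (i₀ + R.natDegree))⁻¹ := by
    rw [show -(i₀ : ℤ) - (R.natDegree : ℤ) = -((i₀ + R.natDegree : ℕ) : ℤ) from by push_cast; ring,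
      zpow_neg, zpow_natCast]
  rw [hpow]
  rw [inv_mul_lt_iff₀ (by positivity)]
  exact hmain
end

section
/- Let f, g ∈ ℝ[x,y] be bivariate polynomials with real coefficients, of positive degree in both x and y, having no common nonconstant factor, and set R^{(y)} := res(f,g;y) ∈ ℝ[x] and R^{(x)} := res(f,g;x) ∈ ℝ[y]. Let Δ_α ⊆ ℂ be a closed disc containing exactly one complex root of R^{(y)}, namely a real number α, and let Δ_β ⊆ ℂ be a closed disc containing exactly one complex root of R^{(x)}, namely a real number β. Then every (z₁, z₂) ∈ Δ_α × Δ_β with f(z₁,z₂) = g(z₁,z₂) = 0 satisfies (z₁,z₂) = (α,β); in particular, the polydisc Δ_α × Δ_β contains at most one common solution of f = g = 0, and if it contains one, that solution is real. -/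
open Polynomial

/-- The Sylvester matrix of two univariate polynomials `f` and `g`. -/
noncomputable def sylvester {R : Type*} [CommRing R] (f g : Polynomial R) :
    Matrix (Fin (f.natDegree + g.natDegree)) (Fin (f.natDegree + g.natDegree)) R :=
  Matrix.of fun i j =>
    if (i : ℕ) < g.natDegree then
      (if (i : ℕ) ≤ (j : ℕ) ∧ (j : ℕ) ≤ (i : ℕ) + f.natDegree
        then f.coeff ((i : ℕ) + f.natDegree - (j : ℕ)) else 0)
    else
      (if (i : ℕ) - g.natDegree ≤ (j : ℕ) ∧ (j : ℕ) ≤ ((i : ℕ) - g.natDegree) + g.natDegree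
        then g.coeff (((i : ℕ) - g.natDegree) + g.natDegree - (j : ℕ)) else 0)

/-- The resultant of two univariate polynomials; for `f g : (R[x])[y]` this is
`res(f,g;y) ∈ R[x]`. -/
noncomputable def resultant {R : Type*} [CommRing R] (f g : Polynomial R) : R :=
  (_root_.sylvester f g).det

/-- Exchange the two variables of a bivariate polynomial: a polynomial in `y`
with coefficients in `R[x]` becomes the same polynomial regarded in `x` with
coefficients in `R[y]`. -/
noncomputable def swapXY {R : Type*} [CommRing R] (f : Polynomial (Polynomial R)) :
    Polynomial (Polynomial R) :=
  Polynomial.eval₂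
    (Polynomial.eval₂RingHom (Polynomial.C.comp Polynomial.C) Polynomial.X)
    (Polynomial.C Polynomial.X) f

/-- Evaluation of a real bivariate polynomial `f ∈ (ℝ[x])[y]` at a complex
point `(x, y)`. -/
noncomputable def evalBivR (x y : ℂ) (f : Polynomial (Polynomial ℝ)) : ℂ :=
  Polynomial.eval₂
    ((Polynomial.evalRingHom x).comp (Polynomial.mapRingHom (algebraMap ℝ ℂ))) y f

section Aux
open Matrix
variable {R : Type*} [CommRing R]

lemma X_pow_mul_eq_sum (p : R[X]) (e : ℕ) :
    (X : R[X]) ^ e * p = ∑ k ∈ Finset.range (p.natDegree + 1), C (p.coeff k) * X ^ (e + k) := by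
  conv_lhs => rw [p.as_sum_range]
  rw [Finset.mul_sum]
  refine Finset.sum_congr rfl fun k _ => ?_
  rw [← C_mul_X_pow_eq_monomial, pow_add]
  ring

lemma sylvester_row_sum (f g : R[X]) (i : Fin (f.natDegree + g.natDegree)) :
    ∑ j : Fin (f.natDegree + g.natDegree),
      C (_root_.sylvester f g i j) * (X : R[X]) ^ (f.natDegree + g.natDegree - 1 - (j : ℕ)) =
    if (i : ℕ) < g.natDegree then X ^ (g.natDegree - 1 - (i : ℕ)) * f
    else X ^ (f.natDegree + g.natDegree - 1 - (i : ℕ)) * g := by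
  by_cases hi : (i : ℕ) < g.natDegree
  · rw [if_pos hi, X_pow_mul_eq_sum]
    have hrow : ∀ j : Fin (f.natDegree + g.natDegree),
        C (_root_.sylvester f g i j) * (X : R[X]) ^ (f.natDegree + g.natDegree - 1 - (j : ℕ)) =
        if (j : ℕ) ∈ Finset.Icc (i : ℕ) ((i : ℕ) + f.natDegree)
          then C (f.coeff ((i : ℕ) + f.natDegree - (j : ℕ)))
            * X ^ (f.natDegree + g.natDegree - 1 - (j : ℕ)) else 0 := by
      intro j
      simp only [_root_.sylvester, Matrix.of_apply, hi, if_true, Finset.mem_Icc]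
      split <;> simp
    rw [Finset.sum_congr rfl (fun j _ => hrow j),
      Fin.sum_univ_eq_sum_range (fun j => if j ∈ Finset.Icc (i : ℕ) ((i : ℕ) + f.natDegree)
        then C (f.coeff ((i : ℕ) + f.natDegree - j))
          * (X : R[X]) ^ (f.natDegree + g.natDegree - 1 - j) else 0),
      Finset.sum_ite_mem]
    have hsub : Finset.range (f.natDegree + g.natDegree)
        ∩ Finset.Icc (i : ℕ) ((i : ℕ) + f.natDegree)
        = Finset.Icc (i : ℕ) ((i : ℕ) + f.natDegree) := by
      apply Finset.inter_eq_right.mpr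
      intro j hj
      simp only [Finset.mem_Icc] at hj
      simp only [Finset.mem_range]
      omega
    rw [hsub]
    refine Finset.sum_nbij' (fun j => (i : ℕ) + f.natDegree - j)
      (fun k => (i : ℕ) + f.natDegree - k) ?_ ?_ ?_ ?_ ?_
    · intro a ha; simp only [Finset.mem_Icc] at ha; simp only [Finset.mem_range]; omega
    · intro a ha; simp only [Finset.mem_range] at ha; simp only [Finset.mem_Icc]; omega
    · intro a ha; simp only [Finset.mem_Icc] at ha; omega
    · intro a ha; simp only [Finset.mem_range] at ha; omega
    · intro a ha
      simp only [Finset.mem_Icc] at ha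
      have h2 : f.natDegree + g.natDegree - 1 - a
          = g.natDegree - 1 - (i : ℕ) + ((i : ℕ) + f.natDegree - a) := by omega
      rw [h2]
  · rw [if_neg hi, X_pow_mul_eq_sum]
    push_neg at hi
    have hiN : (i : ℕ) < f.natDegree + g.natDegree := i.isLt
    have hrow : ∀ j : Fin (f.natDegree + g.natDegree),
        C (_root_.sylvester f g i j) * (X : R[X]) ^ (f.natDegree + g.natDegree - 1 - (j : ℕ)) =
        if (j : ℕ) ∈ Finset.Icc ((i : ℕ) - g.natDegree) ((i : ℕ))
          then C (g.coeff ((i : ℕ) - (j : ℕ)))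
            * X ^ (f.natDegree + g.natDegree - 1 - (j : ℕ)) else 0 := by
      intro j
      have hin : ¬ ((i : ℕ) < g.natDegree) := by omega
      simp only [_root_.sylvester, Matrix.of_apply, hin, if_false, Finset.mem_Icc]
      have h3 : (i : ℕ) - g.natDegree + g.natDegree = (i : ℕ) := by omega
      rw [h3]
      split <;> simp
    rw [Finset.sum_congr rfl (fun j _ => hrow j),
      Fin.sum_univ_eq_sum_range (fun j => if j ∈ Finset.Icc ((i : ℕ) - g.natDegree) ((i : ℕ))
        then C (g.coeff ((i : ℕ) - j))
          * (X : R[X]) ^ (f.natDegree + g.natDegree - 1 - j) else 0),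
      Finset.sum_ite_mem]
    have hsub : Finset.range (f.natDegree + g.natDegree)
        ∩ Finset.Icc ((i : ℕ) - g.natDegree) ((i : ℕ))
        = Finset.Icc ((i : ℕ) - g.natDegree) ((i : ℕ)) := by
      apply Finset.inter_eq_right.mpr
      intro j hj
      simp only [Finset.mem_Icc] at hj
      simp only [Finset.mem_range]
      omega
    rw [hsub]
    refine Finset.sum_nbij' (fun j => (i : ℕ) - j) (fun k => (i : ℕ) - k) ?_ ?_ ?_ ?_ ?_
    · intro a ha; simp only [Finset.mem_Icc] at ha; simp only [Finset.mem_range]; omega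
    · intro a ha; simp only [Finset.mem_range] at ha; simp only [Finset.mem_Icc]; omega
    · intro a ha; simp only [Finset.mem_Icc] at ha; omega
    · intro a ha; simp only [Finset.mem_range] at ha; omega
    · intro a ha
      simp only [Finset.mem_Icc] at ha
      have h2 : f.natDegree + g.natDegree - 1 - a
          = f.natDegree + g.natDegree - 1 - (i : ℕ) + ((i : ℕ) - a) := by omega
      rw [h2]

lemma resultant_mem_span (f g : R[X]) (h : 0 < f.natDegree + g.natDegree) :
    C (_root_.resultant f g) ∈ Ideal.span {f, g} := by
  set A : Matrix _ _ R[X] := (_root_.sylvester f g).map C with hA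
  have hdet : A.det = C (_root_.resultant f g) := (RingHom.map_det C _).symm
  set v : Fin (f.natDegree + g.natDegree) → R[X] :=
    fun j => X ^ (f.natDegree + g.natDegree - 1 - (j : ℕ)) with hv
  have hAv : A *ᵥ v = fun i : Fin (f.natDegree + g.natDegree) => if (i : ℕ) < g.natDegree
      then X ^ (g.natDegree - 1 - (i : ℕ)) * f
      else X ^ (f.natDegree + g.natDegree - 1 - (i : ℕ)) * g := by
    funext i
    simp only [Matrix.mulVec, dotProduct, hA, Matrix.map_apply, hv]
    exact sylvester_row_sum f g i
  have key : A.det • v = A.adjugate *ᵥ (A *ᵥ v) := by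
    rw [Matrix.mulVec_mulVec, Matrix.adjugate_mul, Matrix.smul_mulVec, Matrix.one_mulVec]
  set j0 : Fin (f.natDegree + g.natDegree) := ⟨f.natDegree + g.natDegree - 1, by omega⟩ with hj0
  have hvj0 : v j0 = 1 := by simp [hv, hj0]
  have h3 : A.det = ∑ i, A.adjugate j0 i * (A *ᵥ v) i := by
    have := congrFun key j0
    simpa [Pi.smul_apply, smul_eq_mul, hvj0, Matrix.mulVec, dotProduct] using this
  rw [← hdet, h3, hAv]
  apply Ideal.sum_mem
  intro i _
  by_cases hi : (i : ℕ) < g.natDegree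
  · simp only [hi, if_true]
    exact Ideal.mul_mem_left _ _ (Ideal.mul_mem_left _ _ (Ideal.subset_span (by simp)))
  · simp only [hi, if_false]
    exact Ideal.mul_mem_left _ _ (Ideal.mul_mem_left _ _ (Ideal.subset_span (by simp)))

lemma eval₂_CC (p : R[X]) :
    Polynomial.eval₂ ((Polynomial.C : R[X] →+* (R[X])[X]).comp (Polynomial.C : R →+* R[X]))
      (Polynomial.X : (R[X])[X]) p = p.map Polynomial.C := by
  rfl

lemma swapXY_coeff (p : Polynomial (Polynomial R)) (i j : ℕ) :
    ((swapXY p).coeff j).coeff i = (p.coeff i).coeff j := by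
  induction p using Polynomial.induction_on' with
  | add p q hp hq =>
    simp only [swapXY, eval₂_add] at *
    simp [coeff_add, hp, hq]
  | monomial k a =>
    simp only [swapXY, eval₂_monomial, coe_eval₂RingHom]
    rw [eval₂_CC]
    rw [← C_pow, coeff_mul_C, coeff_map, coeff_C_mul, coeff_X_pow, coeff_monomial]
    by_cases hk : k = i
    · subst hk; simp
    · rw [if_neg hk, if_neg (fun h => hk h.symm)]
      simp

lemma natDegree_swapXY_pos (p : Polynomial (Polynomial R))
    (hp : ∃ k, 0 < (p.coeff k).natDegree) : 0 < (swapXY p).natDegree := by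
  obtain ⟨k, hk⟩ := hp
  have hne : p.coeff k ≠ 0 := fun h => by simp [h] at hk
  have hc : (p.coeff k).coeff (p.coeff k).natDegree ≠ 0 :=
    Polynomial.leadingCoeff_ne_zero.mpr hne
  have h1 : ((swapXY p).coeff (p.coeff k).natDegree) ≠ 0 := by
    intro h
    apply hc
    rw [← swapXY_coeff p k (p.coeff k).natDegree, h, coeff_zero]
  have := Polynomial.le_natDegree_of_ne_zero h1
  omega

end Aux

lemma evalBivR_swapXY (a b : ℂ) (p : Polynomial (Polynomial ℝ)) :
    evalBivR a b (swapXY p) = evalBivR b a p := by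
  have hφ : evalBivR a b (swapXY p) =
      (Polynomial.eval₂RingHom
        ((Polynomial.evalRingHom a).comp (Polynomial.mapRingHom (algebraMap ℝ ℂ))) b)
        (swapXY p) := rfl
  rw [hφ]
  unfold swapXY
  rw [Polynomial.hom_eval₂]
  have h1 : (Polynomial.eval₂RingHom
      ((Polynomial.evalRingHom a).comp (Polynomial.mapRingHom (algebraMap ℝ ℂ))) b)
      (Polynomial.C Polynomial.X) = a := by
    simp
  have h2 : ((Polynomial.eval₂RingHom
        ((Polynomial.evalRingHom a).comp (Polynomial.mapRingHom (algebraMap ℝ ℂ))) b).comp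
      (Polynomial.eval₂RingHom (Polynomial.C.comp Polynomial.C) Polynomial.X)) =
      ((Polynomial.evalRingHom b).comp (Polynomial.mapRingHom (algebraMap ℝ ℂ))) := by
    apply Polynomial.ringHom_ext <;> simp
  rw [h1, h2]
  rfl

lemma aeval_resultant_eq_zero (f g : Polynomial (Polynomial ℝ))
    (h : 0 < f.natDegree + g.natDegree) (z₁ z₂ : ℂ)
    (hf : evalBivR z₁ z₂ f = 0) (hg : evalBivR z₁ z₂ g = 0) :
    Polynomial.aeval z₁ (_root_.resultant f g) = 0 := by
  obtain ⟨u, w, huw⟩ := Ideal.mem_span_pair.mp (resultant_mem_span f g h)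
  set φ := Polynomial.eval₂RingHom
    ((Polynomial.evalRingHom z₁).comp (Polynomial.mapRingHom (algebraMap ℝ ℂ))) z₂ with hφdef
  have hφ := congrArg φ huw
  have hf' : φ f = 0 := hf
  have hg' : φ g = 0 := hg
  rw [map_add, map_mul, map_mul, hf', hg', mul_zero, mul_zero, add_zero] at hφ
  have hC : φ (Polynomial.C (_root_.resultant f g)) = Polynomial.aeval z₁ (_root_.resultant f g) := by
    rw [hφdef, coe_eval₂RingHom, Polynomial.eval₂_C]
    simp only [Polynomial.aeval_def, Polynomial.eval₂_eq_eval_map]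
    rfl
  rw [hC] at hφ
  exact hφ.symm

theorem polydisc_contains_at_most_one_solution (f g : Polynomial (Polynomial ℝ))
    (hfy : 0 < f.natDegree) (hgy : 0 < g.natDegree)
    (hfx : ∃ k, 0 < (f.coeff k).natDegree) (hgx : ∃ k, 0 < (g.coeff k).natDegree)
    (hcop : ∀ d : Polynomial (Polynomial ℝ), d ∣ f → d ∣ g → IsUnit d)
    (cα cβ : ℂ) (ρα ρβ : ℝ) (hρα : 0 ≤ ρα) (hρβ : 0 ≤ ρβ) (α β : ℝ)
    (hαmem : ‖(α : ℂ) - cα‖ ≤ ρα)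
    (hαroot : Polynomial.aeval (α : ℂ) (_root_.resultant f g) = 0)
    (hαuniq : ∀ z : ℂ, ‖z - cα‖ ≤ ρα →
      Polynomial.aeval z (_root_.resultant f g) = 0 → z = (α : ℂ))
    (hβmem : ‖(β : ℂ) - cβ‖ ≤ ρβ)
    (hβroot : Polynomial.aeval (β : ℂ) (_root_.resultant (swapXY f) (swapXY g)) = 0)
    (hβuniq : ∀ z : ℂ, ‖z - cβ‖ ≤ ρβ →
      Polynomial.aeval z (_root_.resultant (swapXY f) (swapXY g)) = 0 → z = (β : ℂ)) :
    ∀ z₁ z₂ : ℂ, ‖z₁ - cα‖ ≤ ρα → ‖z₂ - cβ‖ ≤ ρβ →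
      evalBivR z₁ z₂ f = 0 → evalBivR z₁ z₂ g = 0 → z₁ = (α : ℂ) ∧ z₂ = (β : ℂ) := by
  intro z₁ z₂ h1 h2 hf hg
  constructor
  · exact hαuniq z₁ h1 (aeval_resultant_eq_zero f g (by omega) z₁ z₂ hf hg)
  · have hf' : evalBivR z₂ z₁ (swapXY f) = 0 := (evalBivR_swapXY z₂ z₁ f).trans hf
    have hg' : evalBivR z₂ z₁ (swapXY g) = 0 := (evalBivR_swapXY z₂ z₁ g).trans hg
    have hpos : 0 < (swapXY f).natDegree + (swapXY g).natDegree := by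
      have := natDegree_swapXY_pos f hfx
      omega
    exact hβuniq z₂ h2 (aeval_resultant_eq_zero (swapXY f) (swapXY g) hpos z₂ z₁ hf' hg')
end

section
/- Let f ∈ ℂ[x,y] be a nonzero square-free bivariate polynomial. Consider F(s,y) := f(s·y, y) as an element of the polynomial ring ℂ[s,y], and let m be the largest integer such that y^m divides F in ℂ[s,y]. Then F / y^m is a square-free element of ℂ[s,y]. -/
open Polynomial

/-- For a bivariate polynomial `f ∈ (ℂ[x])[y]`, the substitution `x ↦ s·y`,
yielding `F(s,y) = f(s·y, y)` as an element of `(ℂ[s])[y]`. -/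
noncomputable def substSY (f : Polynomial (Polynomial ℂ)) : Polynomial (Polynomial ℂ) :=
  Polynomial.eval₂
    (Polynomial.eval₂RingHom (Polynomial.C.comp Polynomial.C)
      (Polynomial.C Polynomial.X * Polynomial.X))
    Polynomial.X f

noncomputable def Phi : Polynomial (Polynomial ℂ) →+* Polynomial (Polynomial ℂ) :=
  eval₂RingHom (eval₂RingHom (C.comp C) (C X * X)) X

lemma substSY_eq (f : Polynomial (Polynomial ℂ)) : substSY f = Phi f := rfl

lemma Phi_X : Phi X = X := eval₂_X _ _

lemma Phi_CC (c : ℂ) : Phi (C (C c)) = C (C c) := by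
  simp [Phi, coe_eval₂RingHom]

lemma Phi_CX : Phi (C X) = C X * X := by
  simp [Phi, coe_eval₂RingHom]

lemma Phi_inj : Function.Injective Phi := by
  set L := FractionRing (Polynomial (Polynomial ℂ))
  set ι : Polynomial (Polynomial ℂ) →+* L := algebraMap _ L with hι
  have hinj : Function.Injective ι := IsFractionRing.injective _ _
  have hX0 : ι X ≠ 0 := fun h => X_ne_zero (hinj (by simpa using h))
  set ω : Polynomial (Polynomial ℂ) →+* L :=
    eval₂RingHom (eval₂RingHom (ι.comp (C.comp C)) (ι (C X) * (ι X)⁻¹)) (ι X) with hω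
  have key : ω.comp Phi = ι := by
    apply Polynomial.ringHom_ext
    · intro a
      have : (ω.comp Phi).comp C = ι.comp C := by
        apply Polynomial.ringHom_ext
        · intro c
          simp [Phi_CC, ω, coe_eval₂RingHom]
        · show ω (Phi (C X)) = ι (C X)
          rw [Phi_CX, map_mul]
          have h1 : ω (C X) = ι (C X) * (ι X)⁻¹ := by simp [ω, coe_eval₂RingHom]
          have h2 : ω X = ι X := by simp [ω, coe_eval₂RingHom]
          rw [h1, h2, mul_assoc, inv_mul_cancel₀ hX0, mul_one]
      exact DFunLike.congr_fun this a
    · show ω (Phi X) = ι X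
      rw [Phi_X]; simp [ω, coe_eval₂RingHom]
  intro a b h
  apply hinj
  rw [← key]
  simp [h]

lemma clear_inner (a : Polynomial ℂ) :
    ∃ (k : ℕ) (h : Polynomial (Polynomial ℂ)), Phi h = X ^ k * C a := by
  induction a using Polynomial.induction_on' with
  | add p q hp hq =>
    obtain ⟨k₁, h₁, e₁⟩ := hp
    obtain ⟨k₂, h₂, e₂⟩ := hq
    refine ⟨k₁ + k₂, X ^ k₂ * h₁ + X ^ k₁ * h₂, ?_⟩
    rw [map_add, map_mul, map_mul, map_pow, map_pow, Phi_X, e₁, e₂, C_add]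
    ring
  | monomial i c =>
    refine ⟨i, C (monomial i c), ?_⟩
    have e0 : Phi (C (monomial i c)) = C (C c) * (C X * X) ^ i := by
      simp [Phi, coe_eval₂RingHom, eval₂_monomial]
    rw [e0, ← C_mul_X_pow_eq_monomial]
    rw [mul_pow, ← C_pow, ← mul_assoc, ← C_mul]
    ring

lemma clear (g : Polynomial (Polynomial ℂ)) :
    ∃ (k : ℕ) (h : Polynomial (Polynomial ℂ)), Phi h = X ^ k * g := by
  induction g using Polynomial.induction_on' with
  | add p q hp hq =>
    obtain ⟨k₁, h₁, e₁⟩ := hp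
    obtain ⟨k₂, h₂, e₂⟩ := hq
    refine ⟨k₁ + k₂, X ^ k₂ * h₁ + X ^ k₁ * h₂, ?_⟩
    rw [map_add, map_mul, map_mul, map_pow, map_pow, Phi_X, e₁, e₂]
    ring
  | monomial n a =>
    obtain ⟨k, h, e⟩ := clear_inner a
    refine ⟨k, h * X ^ n, ?_⟩
    rw [map_mul, map_pow, Phi_X, e, ← C_mul_X_pow_eq_monomial]
    ring

theorem squarefree_of_substSY_div_y_pow (f : Polynomial (Polynomial ℂ))
    (hf : f ≠ 0) (hsf : Squarefree f) (m : ℕ) (G : Polynomial (Polynomial ℂ))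
    (hfactor : substSY f = Polynomial.X ^ m * G) (hmax : ¬ Polynomial.X ∣ G) :
    Squarefree G := by
  rw [substSY_eq] at hfactor
  have hXirr : Irreducible (X : Polynomial (Polynomial ℂ)) := Polynomial.prime_X.irreducible
  intro a ha
  by_contra hu
  have hG0 : G ≠ 0 := by
    intro h0
    apply hf
    apply Phi_inj
    rw [hfactor, h0, map_zero, mul_zero]
  have ha0 : a ≠ 0 := by
    rintro rfl
    exact hG0 (zero_dvd_iff.mp (by simpa using ha))
  obtain ⟨p, hpirr, hpa⟩ := WfDvdMonoid.exists_irreducible_factor hu ha0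
  have hp : Prime p := UniqueFactorizationMonoid.irreducible_iff_prime.mp hpirr
  have haG : a ∣ G := (dvd_mul_left a a).trans ha
  have hpG : p ∣ G := hpa.trans haG
  have hpX : ¬ p ∣ X := fun h => hmax ((hpirr.dvd_symm hXirr h).trans hpG)
  have hppG : p * p ∣ G := (mul_dvd_mul hpa hpa).trans ha
  obtain ⟨t, htt⟩ : p * p ∣ Phi f := by
    rw [hfactor]; exact hppG.trans (dvd_mul_left G (X ^ m))
  obtain ⟨k, hp', ek⟩ := clear p
  obtain ⟨j, ht', ej⟩ := clear t
  have key : hp' * hp' * ht' = X ^ (k + k + j) * f := by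
    apply Phi_inj
    rw [map_mul, map_mul, ek, ej, map_mul, map_pow, Phi_X, htt]
    ring
  have hp'0 : hp' ≠ 0 := by
    intro h0
    rw [h0, map_zero] at ek
    exact hp.ne_zero (by
      rcases mul_eq_zero.mp ek.symm with h | h
      · exact absurd h (pow_ne_zero _ X_ne_zero)
      · exact h)
  obtain ⟨r, h', hXh', hhp⟩ := WfDvdMonoid.max_power_factor hp'0 hXirr
  have hh'0 : h' ≠ 0 := by rintro rfl; simp at hhp; exact hp'0 hhp
  have hdvd : h' * h' ∣ f := by
    have h1 : h' * h' ∣ X ^ (k + k + j) * f := by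
      refine dvd_trans ?_ ⟨ht', key.symm⟩
      have : h' ∣ hp' := ⟨X ^ r, by rw [hhp]; ring⟩
      exact mul_dvd_mul this this
    refine UniqueFactorizationMonoid.dvd_of_dvd_mul_right_of_no_prime_factors
      (mul_ne_zero hh'0 hh'0) ?_ h1
    intro d hd hdX hdprime
    apply hXh'
    have hdh' : d ∣ h' := hdprime.dvd_of_dvd_pow (show d ∣ h' ^ 2 by rwa [sq])
    have hdX' : d ∣ X := hdprime.dvd_of_dvd_pow hdX
    exact (hdprime.irreducible.dvd_symm hXirr hdX').trans hdh'
  have hunit : IsUnit h' := hsf h' hdvd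
  have hup : IsUnit (Phi h') := hunit.map Phi
  have heq : X ^ k * p = X ^ r * Phi h' := by
    rw [← ek, hhp, map_mul, map_pow, Phi_X]
  have hpXr : p ∣ X ^ r := by
    have h1 : p ∣ X ^ r * Phi h' := heq ▸ dvd_mul_left p (X ^ k)
    exact (hup.dvd_mul_right).mp h1
  exact hpX (hp.dvd_of_dvd_pow hpXr)
end

section
/- Let g ∈ ℂ[z] be a polynomial of degree n ≥ 1 with leading coefficient g_n, and let z_1, …, z_n ∈ ℂ be pairwise distinct points. For each i set ω_i := g(z_i) / ∏_{j ≠ i} (z_i − z_j) and r_i := (n/2)·(ω_i / g_n), and let D_i be the closed disc with center z_i − r_i and radius |r_i|. Then every root of g belongs to the union D_1 ∪ … ∪ D_n. -/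
open Polynomial

lemma disc_of_re (u v : ℂ) (hu : u ≠ 0) (h : (v / u).re ≤ -(1/2)) :
    ‖u + v‖ ≤ ‖v‖ := by
  rw [Complex.norm_def, Complex.norm_def]
  apply Real.sqrt_le_sqrt
  have hnorm : 0 < Complex.normSq u := Complex.normSq_pos.2 hu
  rw [Complex.div_re] at h
  have key : v.re * u.re + v.im * u.im ≤ -(1/2) * Complex.normSq u := by
    rw [← add_div, div_le_iff₀ hnorm] at h
    linarith
  simp only [Complex.normSq_apply, Complex.add_re, Complex.add_im] at *
  nlinarith [key]

theorem neumaier_inclusion (g : Polynomial ℂ) (n : ℕ) (hn : g.natDegree = n) (hn1 : 1 ≤ n)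
    (z : Fin n → ℂ) (hz : Function.Injective z)
    (ω r : Fin n → ℂ)
    (hω : ∀ i, ω i = g.eval (z i) / ∏ j ∈ Finset.univ.erase i, (z i - z j))
    (hr : ∀ i, r i = ((n : ℂ) / 2) * (ω i / g.leadingCoeff)) :
    ∀ w : ℂ, g.eval w = 0 →
      ∃ i : Fin n, ‖w - (z i - r i)‖ ≤ ‖r i‖ := by
  intro w hw
  classical
  by_cases hwz : ∃ i, w = z i
  · obtain ⟨i, rfl⟩ := hwz
    refine ⟨i, ?_⟩
    have hoi : ω i = 0 := by rw [hω i, hw, zero_div]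
    have hri : r i = 0 := by rw [hr i, hoi]; ring
    simp [hri]
  push_neg at hwz
  have hg0 : g ≠ 0 := fun h => by simp [h] at hn; omega
  have ha : g.leadingCoeff ≠ 0 := leadingCoeff_ne_zero.2 hg0
  set a := g.leadingCoeff with ha'
  have hinj : Set.InjOn z (Finset.univ : Finset (Fin n)) := hz.injOn
  set p : Polynomial ℂ := Lagrange.nodal Finset.univ z with hp
  have hpmonic : p.Monic := Lagrange.nodal_monic
  have hpdeg : p.natDegree = n := by
    rw [hp, Lagrange.natDegree_nodal]; simp
  have hdegCp : g.degree = (C a * p).degree := by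
    rw [degree_C_mul ha, degree_eq_natDegree hg0, degree_eq_natDegree hpmonic.ne_zero, hn, hpdeg]
  have hlc : g.leadingCoeff = (C a * p).leadingCoeff := by
    rw [leadingCoeff_mul, leadingCoeff_C, hpmonic.leadingCoeff, mul_one]
  have hflt : (g - C a * p).degree < (Finset.univ : Finset (Fin n)).card := by
    have := degree_sub_lt hdegCp hg0 hlc
    calc (g - C a * p).degree < g.degree := this
      _ = (n : ℕ) := by rw [degree_eq_natDegree hg0, hn]
      _ ≤ _ := by simp
  set f := g - C a * p with hf
  have heq := Lagrange.eq_interpolate hinj hflt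
  have hfeval : ∀ i : Fin n, f.eval (z i) = g.eval (z i) := by
    intro i
    have hpz : p.eval (z i) = 0 := by
      rw [hp, Lagrange.eval_nodal]
      exact Finset.prod_eq_zero (Finset.mem_univ i) (sub_self _)
    simp [hf, hpz]
  have hx : ∀ i ∈ (Finset.univ : Finset (Fin n)), w ≠ z i := fun i _ => hwz i
  have hP : p.eval w ≠ 0 := by
    rw [hp, Lagrange.eval_nodal]
    exact Finset.prod_ne_zero_iff.2 fun i _ => sub_ne_zero.2 (hwz i)
  have hωnw : ∀ i : Fin n, Lagrange.nodalWeight Finset.univ z i * (w - z i)⁻¹ * g.eval (z i)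
      = ω i * (w - z i)⁻¹ := by
    intro i
    rw [hω i, Lagrange.nodalWeight, div_eq_mul_inv, ← Finset.prod_inv_distrib]
    ring
  have hevalw : f.eval w = p.eval w * ∑ i, ω i * (w - z i)⁻¹ := by
    conv_lhs => rw [heq]
    rw [Lagrange.eval_interpolate_not_at_node _ hx]
    rw [← hp]
    congr 1
    exact Finset.sum_congr rfl fun i _ => by rw [hfeval i]; exact hωnw i
  have hfw : f.eval w = -a * p.eval w := by
    simp [hf, hw]
  have hsum : ∑ i, ω i * (w - z i)⁻¹ = -a := by
    refine mul_left_cancel₀ hP ?_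
    rw [← hevalw, hfw]; ring
  have hsum2 : ∑ i, (ω i / (a * (w - z i))).re = -1 := by
    have h1 : ∑ i, ω i / (a * (w - z i)) = -1 := by
      have : ∑ i, ω i / (a * (w - z i)) = (∑ i, ω i * (w - z i)⁻¹) / a := by
        rw [Finset.sum_div]
        exact Finset.sum_congr rfl fun i _ => by
          rw [mul_comm a, div_mul_eq_div_div, div_eq_mul_inv, div_eq_mul_inv (ω i), div_eq_mul_inv]
      rw [this, hsum, neg_div, div_self ha]
    rw [← Complex.re_sum, h1]
    simp
  have hn' : (0:ℝ) < n := by exact_mod_cast hn1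
  have hex : ∃ i, (ω i / (a * (w - z i))).re ≤ -(1/n) := by
    by_contra h
    push_neg at h
    have hne : (Finset.univ : Finset (Fin n)).Nonempty := ⟨⟨0, hn1⟩, Finset.mem_univ _⟩
    have hlt := Finset.sum_lt_sum_of_nonempty hne fun i _ => h i
    rw [hsum2, Finset.sum_const, Finset.card_univ, Fintype.card_fin, nsmul_eq_mul] at hlt
    rw [mul_neg, mul_one_div, div_self (ne_of_gt hn')] at hlt
    exact lt_irrefl _ hlt
  obtain ⟨i, hi⟩ := hex
  refine ⟨i, ?_⟩
  set u := w - z i with hu'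
  have hu : u ≠ 0 := sub_ne_zero.2 (hwz i)
  have hnC : (n : ℂ) ≠ 0 := Nat.cast_ne_zero.2 (by omega)
  have hωi : ω i = 2 / (n : ℂ) * a * r i := by
    rw [hr i]; field_simp
  have ht : ω i / (a * u) = ((2 / (n:ℝ) : ℝ) : ℂ) * (r i / u) := by
    rw [hωi]
    push_cast
    field_simp
  have hre : (ω i / (a * u)).re = 2 / (n:ℝ) * (r i / u).re := by
    rw [ht, Complex.re_ofReal_mul]
  rw [hre] at hi
  have h2 : (r i / u).re ≤ -(1/2) := by
    rw [div_mul_eq_mul_div, div_le_iff₀ hn'] at hi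
    have hone : -(1/(n:ℝ)) * (n:ℝ) = -1 := by field_simp
    linarith
  have : w - (z i - r i) = u + r i := by rw [hu']; ring
  rw [this]
  exact disc_of_re u (r i) hu h2
end

section
/- Let g ∈ ℂ[z] be a polynomial of degree n ≥ 1 with leading coefficient g_n, and let z_1, …, z_n ∈ ℂ be pairwise distinct points. For each i set ω_i := g(z_i) / ∏_{j ≠ i} (z_i − z_j) and r_i := (n/2)·(ω_i / g_n), and let D_i be the closed disc with center z_i − r_i and radius |r_i|. Let C be a connected component of the union D_1 ∪ … ∪ D_n. Then the number of roots of g lying in C, counted with multiplicity, equals the number of indices i with D_i ⊆ C. -/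
open Polynomial Filter

-- half-plane characterization of disc exterior
lemma aux_re (rr u : ℂ) (hu : u ≠ 0) (h : ‖rr‖ < ‖u + rr‖) :
    (-1:ℝ)/2 < (rr / u).re := by
  have h2 : Complex.normSq rr < Complex.normSq (u + rr) := by
    rw [← Complex.sq_norm, ← Complex.sq_norm]
    exact pow_lt_pow_left₀ h (norm_nonneg _) (by norm_num)
  rw [Complex.normSq_add] at h2
  have hN : 0 < Complex.normSq u := Complex.normSq_pos.2 hu
  rw [Complex.div_re]
  rw [Complex.mul_re] at h2
  simp only [Complex.conj_re, Complex.conj_im] at h2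
  rw [← add_div, lt_div_iff₀ hN]
  simp only [Complex.normSq_apply] at h2 hN ⊢
  nlinarith

lemma aux_exists_tuple {n : ℕ} (p : Polynomial ℂ) (h : Multiset.card p.roots = n) :
    ∃ w : Fin n → ℂ, p.roots = Multiset.map w Finset.univ.val := by
  classical
  set l := p.roots.toList with hl
  have hlen : l.length = n := by rw [hl, Multiset.length_toList, h]
  refine ⟨fun i => l.get (Fin.cast hlen.symm i), ?_⟩
  rw [Fin.univ_val_map]
  have : List.ofFn (fun i : Fin n => l.get (Fin.cast hlen.symm i)) = l := by
    apply List.ext_get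
    · simp [hlen]
    · intro i h1 h2
      simp
  rw [this, Multiset.coe_toList]

lemma aux_roots_eq {n : ℕ} {a : ℂ} (ha : a ≠ 0) (v : Fin n → ℂ) :
    (C a * ∏ i : Fin n, (X - C (v i))).roots = Multiset.map v Finset.univ.val := by
  rw [roots_C_mul _ ha, Finset.prod_eq_multiset_prod,
    show (fun i => X - C (v i)) = ((fun a => X - C a) ∘ v) from rfl,
    ← Multiset.map_map, roots_multiset_prod_X_sub_C]

open scoped Classical in
lemma aux_card_filter {n : ℕ} (v : Fin n → ℂ) (S : Set ℂ) :
    Multiset.card ((Multiset.map v Finset.univ.val).filter (fun w => w ∈ S)) =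
      (Finset.univ.filter (fun i => v i ∈ S)).card := by
  rw [Multiset.filter_map, Multiset.card_map]
  rfl


open scoped Classical in
theorem neumaier_component_root_count (g : Polynomial ℂ) (n : ℕ)
    (hn : g.natDegree = n) (hn1 : 1 ≤ n)
    (z : Fin n → ℂ) (hz : Function.Injective z)
    (ω r : Fin n → ℂ)
    (hω : ∀ i, ω i = g.eval (z i) / ∏ j ∈ Finset.univ.erase i, (z i - z j))
    (hr : ∀ i, r i = ((n : ℂ) / 2) * (ω i / g.leadingCoeff))
    (D : Fin n → Set ℂ)
    (hD : ∀ i, D i = {w : ℂ | ‖w - (z i - r i)‖ ≤ ‖r i‖})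
    (U : Set ℂ) (hU : U = ⋃ i, D i)
    (x₀ : ℂ) (hx₀ : x₀ ∈ U) (C : Set ℂ) (hC : C = connectedComponentIn U x₀) :
    (g.roots.filter (fun w => w ∈ C)).card =
      (Finset.univ.filter (fun i : Fin n => D i ⊆ C)).card := by
  classical
  have hg0 : g ≠ 0 := fun h => by simp [h] at hn; omega
  set a := g.leadingCoeff with ha_def
  have ha : a ≠ 0 := leadingCoeff_ne_zero.2 hg0
  have han : (n : ℂ) ≠ 0 := Nat.cast_ne_zero.2 (by omega)
  set p0 : Polynomial ℂ := ∏ i, (X - Polynomial.C (z i)) with hp0_def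
  set A : Polynomial ℂ := Polynomial.C a * p0 with hA_def
  set B : Polynomial ℂ :=
    ∑ i, Polynomial.C (ω i) * ∏ j ∈ Finset.univ.erase i, (X - Polynomial.C (z j)) with hB_def
  set P : ℝ → Polynomial ℂ := fun t => A + Polynomial.C (t : ℂ) * B with hP_def
  have hp0monic : p0.Monic := monic_prod_of_monic _ _ fun i _ => monic_X_sub_C (z i)
  have hp0deg : p0.natDegree = n := by
    rw [hp0_def, natDegree_prod _ _ fun i _ => X_sub_C_ne_zero (z i)]
    simp
  have hAne : A ≠ 0 := mul_ne_zero (by simpa using ha) hp0monic.ne_zero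
  have hAdeg : A.degree = (n : WithBot ℕ) := by
    rw [hA_def, degree_mul, degree_C ha, zero_add, degree_eq_natDegree hp0monic.ne_zero, hp0deg]
  have hAlead : A.leadingCoeff = a := by
    rw [hA_def, leadingCoeff_mul, leadingCoeff_C, hp0monic.leadingCoeff, mul_one]
  have hbot : (⊥ : WithBot ℕ) < (n : WithBot ℕ) := by
    rw [Nat.cast_withBot]; exact WithBot.bot_lt_coe n
  have hBdeg : B.degree < (n : WithBot ℕ) := by
    rw [hB_def]
    refine lt_of_le_of_lt (degree_sum_le _ _) ?_
    rw [Finset.sup_lt_iff hbot]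
    intro i _
    rw [degree_mul, degree_prod]
    have h1 : ∑ j ∈ Finset.univ.erase i, (X - Polynomial.C (z j)).degree
        = ((n - 1 : ℕ) : WithBot ℕ) := by
      simp only [degree_X_sub_C]
      rw [Finset.sum_const, Finset.card_erase_of_mem (Finset.mem_univ i)]
      simp [Finset.card_univ]
    rw [h1]
    refine lt_of_le_of_lt (add_le_add degree_C_le le_rfl) ?_
    rw [zero_add, Nat.cast_withBot, Nat.cast_withBot]
    exact WithBot.coe_lt_coe.2 (by omega)
  have hzsub : ∀ i j : Fin n, j ≠ i → z i - z j ≠ 0 := fun i j hij =>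
    sub_ne_zero.2 fun h => hij (hz h.symm)
  have hprodne : ∀ i, (∏ j ∈ Finset.univ.erase i, (z i - z j)) ≠ 0 := fun i =>
    Finset.prod_ne_zero_iff.2 fun j hj => hzsub i j (Finset.ne_of_mem_erase hj)
  have hAeval : ∀ i, A.eval (z i) = 0 := by
    intro i
    rw [hA_def, eval_mul, hp0_def, eval_prod]
    rw [Finset.prod_eq_zero (Finset.mem_univ i) (by simp)]
    ring
  have hBeval : ∀ i, B.eval (z i) = g.eval (z i) := by
    intro i
    rw [hB_def, eval_finset_sum]
    rw [Finset.sum_eq_single i]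
    · rw [eval_mul, eval_C, eval_prod]
      simp only [eval_sub, eval_X, eval_C]
      rw [hω i, div_mul_cancel₀ _ (hprodne i)]
    · intro k _ hki
      rw [eval_mul, eval_prod]
      rw [Finset.prod_eq_zero (Finset.mem_erase.2 ⟨fun h => hki (by rw [h]), Finset.mem_univ i⟩)
        (by simp)]
      ring
    · intro h; exact absurd (Finset.mem_univ i) h
  have hgdeg : g.degree = (n : WithBot ℕ) := by rw [degree_eq_natDegree hg0, hn]
  have hgP1 : g = P 1 := by
    have hsub : (g - A).degree < (n : WithBot ℕ) := by
      rw [← hgdeg]; exact degree_sub_lt (hgdeg.trans hAdeg.symm) hg0 hAlead.symm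
    have hzero : (g - A) - B = 0 := by
      refine eq_zero_of_degree_lt_of_eval_index_eq_zero Finset.univ (hz.injOn) ?_ ?_
      · refine lt_of_le_of_lt (degree_sub_le _ _) ?_
        rw [Finset.card_univ, Fintype.card_fin]
        exact max_lt hsub hBdeg
      · intro i _
        rw [eval_sub, eval_sub, hAeval i, hBeval i]
        ring
    have hgAB : g = A + B := by
      have := sub_eq_zero.1 hzero
      rw [sub_eq_iff_eq_add] at this
      rw [this]; ring
    rw [hP_def]
    simp only [Complex.ofReal_one, map_one, one_mul]
    exact hgAB
  have hCtB : ∀ t : ℝ, (Polynomial.C (t : ℂ) * B).degree < A.degree := by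
    intro t
    rw [hAdeg, degree_mul]
    refine lt_of_le_of_lt (add_le_add degree_C_le le_rfl) ?_
    rw [zero_add]; exact hBdeg
  have hPdeg : ∀ t : ℝ, (P t).degree = (n : WithBot ℕ) := by
    intro t
    rw [hP_def]
    simp only []
    rw [degree_add_eq_left_of_degree_lt (hCtB t), hAdeg]
  have hPlead : ∀ t : ℝ, (P t).leadingCoeff = a := by
    intro t
    rw [hP_def]
    simp only []
    rw [leadingCoeff_add_of_degree_lt' (hCtB t), hAlead]
  have hPne : ∀ t : ℝ, P t ≠ 0 := fun t h => by
    have h2 := hPdeg t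
    rw [h, degree_zero] at h2
    exact absurd h2.symm (by simp)
  have hPcard : ∀ t : ℝ, Multiset.card (P t).roots = n := by
    intro t
    rw [← natDegree_eq_of_degree_eq_some (hPdeg t)]
    exact IsAlgClosed.card_roots_eq_natDegree
  -- geometry
  have hDball : ∀ i, D i = Metric.closedBall (z i - r i) ‖r i‖ := by
    intro i; rw [hD i]; ext w; simp [Metric.mem_closedBall, Complex.dist_eq, sub_sub_eq_add_sub]
  have hzD : ∀ i, z i ∈ D i := by intro i; rw [hD i]; simp [sub_sub_cancel]
  have hDU : ∀ i, D i ⊆ U := fun i => hU ▸ Set.subset_iUnion D i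
  have hDconn : ∀ i, IsPreconnected (D i) := fun i =>
    (hDball i) ▸ (convex_closedBall _ _).isPreconnected
  have hDclosed : ∀ i, IsClosed (D i) := fun i => (hDball i) ▸ Metric.isClosed_closedBall
  have hDcompact : ∀ i, IsCompact (D i) := fun i => (hDball i) ▸ isCompact_closedBall _ _
  have hUcomp : IsCompact U := hU ▸ isCompact_iUnion hDcompact
  have hCU : C ⊆ U := hC ▸ connectedComponentIn_subset U x₀
  have habsorb : ∀ S : Set ℂ, S ⊆ U → IsPreconnected S → ∀ x, x ∈ S → x ∈ C → S ⊆ C := by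
    intro S hSU hSconn x hxS hxC
    have h1 : S ⊆ connectedComponentIn U x := hSconn.subset_connectedComponentIn hxS hSU
    rw [hC] at hxC ⊢
    rwa [← connectedComponentIn_eq hxC] at h1
  have hDC : ∀ i, D i ⊆ C ↔ z i ∈ C :=
    fun i => ⟨fun h => h (hzD i), fun h => habsorb _ (hDU i) (hDconn i) _ (hzD i) h⟩
  set I : Finset (Fin n) := Finset.univ.filter (fun i => D i ⊆ C) with hI_def
  have hCunion : C = ⋃ i ∈ I, D i := by
    apply Set.Subset.antisymm
    · intro x hxC
      obtain ⟨i, hi⟩ := Set.mem_iUnion.1 (hU ▸ hCU hxC)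
      have : D i ⊆ C := habsorb _ (hDU i) (hDconn i) x hi hxC
      exact Set.mem_biUnion (Finset.mem_filter.2 ⟨Finset.mem_univ i, this⟩) hi
    · exact Set.iUnion₂_subset fun i hi => (Finset.mem_filter.1 hi).2
  have hWunion : U \ C = ⋃ i ∈ Iᶜ, D i := by
    apply Set.Subset.antisymm
    · rintro x ⟨hxU, hxC⟩
      obtain ⟨i, hi⟩ := Set.mem_iUnion.1 (hU ▸ hxU)
      refine Set.mem_biUnion (Finset.mem_compl.2 fun hmem => ?_) hi
      exact hxC ((Finset.mem_filter.1 hmem).2 hi)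
    · refine Set.iUnion₂_subset fun i hi => fun x hx => ⟨hDU i hx, fun hxC => ?_⟩
      exact (Finset.mem_compl.1 hi)
        (Finset.mem_filter.2 ⟨Finset.mem_univ i, habsorb _ (hDU i) (hDconn i) x hx hxC⟩)
  have hCclosed : IsClosed C := by
    rw [hCunion]; exact Set.Finite.isClosed_biUnion (I.finite_toSet) fun i _ => hDclosed i
  have hWclosed : IsClosed (U \ C) := by
    rw [hWunion]; exact Set.Finite.isClosed_biUnion ((Iᶜ).finite_toSet) fun i _ => hDclosed i
  -- no roots outside U
  have hnoroot : ∀ t ∈ Set.Icc (0:ℝ) 1, ∀ w ∈ (P t).roots, w ∈ U := by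
    intro t ht w hw
    by_contra hwU
    have heval : (P t).eval w = 0 := (mem_roots (hPne t)).1 hw
    have hwD : ∀ i, w ∉ D i := fun i hi => hwU (hU ▸ Set.mem_iUnion.2 ⟨i, hi⟩)
    have hwz : ∀ i, w - z i ≠ 0 := fun i => sub_ne_zero.2 fun h => hwD i (h ▸ hzD i)
    have habs : ∀ i, ‖r i‖ < ‖(w - z i) + r i‖ := by
      intro i
      have h1 := hwD i
      rw [hD i] at h1
      simp only [Set.mem_setOf_eq, not_le] at h1
      rw [show w - z i + r i = w - (z i - r i) by ring]; exact h1
    have hq : ∀ i, (-1:ℝ)/2 < (r i / (w - z i)).re := fun i => aux_re _ _ (hwz i) (habs i)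
    have hωa : ∀ i, ω i / a = (2 / (n:ℂ)) * r i := by
      intro i
      rw [hr i]
      field_simp
    have hAevalw : A.eval w = a * ∏ i, (w - z i) := by
      rw [hA_def, eval_mul, eval_C, hp0_def, eval_prod]
      simp
    have hAne0 : A.eval w ≠ 0 := by
      rw [hAevalw]
      exact mul_ne_zero ha (Finset.prod_ne_zero_iff.2 fun i _ => hwz i)
    set S : ℂ := ∑ i, (ω i / a) / (w - z i) with hS_def
    have hterm : ∀ i ∈ (Finset.univ : Finset (Fin n)), A.eval w * ((ω i / a) / (w - z i))
        = ω i * ∏ j ∈ Finset.univ.erase i, (w - z j) := by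
      intro i _
      rw [hAevalw, ← Finset.mul_prod_erase _ _ (Finset.mem_univ i)]
      calc a * ((w - z i) * ∏ j ∈ Finset.univ.erase i, (w - z j)) * (ω i / a / (w - z i))
          = ω i * (∏ j ∈ Finset.univ.erase i, (w - z j)) * (a / a) * ((w - z i) / (w - z i)) := by
            ring
        _ = ω i * ∏ j ∈ Finset.univ.erase i, (w - z j) := by
            rw [div_self ha, div_self (hwz i)]; ring
    have hBw : B.eval w = ∑ i, ω i * ∏ j ∈ Finset.univ.erase i, (w - z j) := by
      rw [hB_def, eval_finset_sum]
      refine Finset.sum_congr rfl fun i _ => ?_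
      rw [eval_mul, eval_C, eval_prod]
      simp
    have hkey : A.eval w * (1 + (t:ℂ) * S) = (P t).eval w := by
      have e1 : A.eval w * (1 + (t:ℂ) * S)
          = A.eval w + (t:ℂ) * ∑ i, A.eval w * ((ω i / a) / (w - z i)) := by
        rw [← Finset.mul_sum, hS_def]
        ring
      rw [e1, Finset.sum_congr rfl hterm, ← hBw, hP_def]
      simp only [eval_add, eval_mul, eval_C]
    have h1S : (1:ℂ) + (t:ℂ) * S = 0 := by
      rw [heval] at hkey
      exact (mul_eq_zero.1 hkey).resolve_left hAne0
    have hre : 1 + t * S.re = 0 := by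
      have h2 := congrArg Complex.re h1S
      simpa [Complex.add_re, Complex.one_re, Complex.re_ofReal_mul] using h2
    have hnR : (0:ℝ) < n := Nat.cast_pos.2 (by omega)
    have hSre : (-1:ℝ) < S.re := by
      rw [hS_def, Complex.re_sum]
      have hterm2 : ∀ i ∈ (Finset.univ : Finset (Fin n)),
          -1/(n:ℝ) < ((ω i / a) / (w - z i)).re := by
        intro i _
        rw [hωa i, mul_div_assoc,
          show (2/(n:ℂ)) = (((2/(n:ℝ)) : ℝ) : ℂ) from by push_cast; ring,
          Complex.re_ofReal_mul]
        have h2n : (0:ℝ) < 2/(n:ℝ) := by positivity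
        have h3 := mul_lt_mul_of_pos_left (hq i) h2n
        calc -1/(n:ℝ) = (2/(n:ℝ)) * (-1/2) := by field_simp
          _ < _ := h3
      calc (-1:ℝ) = ∑ _i : Fin n, (-1/(n:ℝ)) := by
            rw [Finset.sum_const, Finset.card_univ, Fintype.card_fin, nsmul_eq_mul]
            field_simp
        _ < _ := Finset.sum_lt_sum_of_nonempty ⟨⟨0, by omega⟩, Finset.mem_univ _⟩ hterm2
    have ht0 : t ≠ 0 := fun h => by rw [h] at hre; simp at hre
    have ht0' : 0 < t := lt_of_le_of_ne ht.1 (Ne.symm ht0)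
    have hlt : t * (-1) < t * S.re := mul_lt_mul_of_pos_left hSre ht0'
    linarith [ht.2]
  -- the counting function
  set f : ℝ → ℕ := fun t => Multiset.card ((P t).roots.filter (fun w => w ∈ C)) with hf_def
  have hf0 : f 0 = I.card := by
    have hP0 : P 0 = Polynomial.C a * ∏ i, (X - Polynomial.C (z i)) := by
      rw [hP_def]
      simp [hA_def, hp0_def]
    have hroots0 : (P 0).roots = Multiset.map z Finset.univ.val := by
      rw [hP0]; exact aux_roots_eq ha z
    show Multiset.card ((P 0).roots.filter (fun w => w ∈ C)) = I.card
    rw [hroots0, aux_card_filter, hI_def]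
    congr 1
    exact Finset.filter_congr fun i _ => by rw [hDC i]
  have hloc : ∀ t ∈ Set.Icc (0:ℝ) 1, ∀ᶠ s in nhdsWithin t (Set.Icc (0:ℝ) 1), f s = f t := by
    intro t ht
    by_contra hcon
    rw [Filter.not_eventually] at hcon
    obtain ⟨u0, hu0, hu0ne⟩ := Filter.exists_seq_forall_of_frequently hcon
    have hmem : ∀ᶠ k in atTop, u0 k ∈ Set.Icc (0:ℝ) 1 :=
      hu0.eventually eventually_mem_nhdsWithin
    obtain ⟨N, hN⟩ := eventually_atTop.1 hmem
    set u : ℕ → ℝ := fun k => u0 (k + N) with hu_def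
    have huIcc : ∀ k, u k ∈ Set.Icc (0:ℝ) 1 := fun k => hN _ (by omega)
    have hune : ∀ k, ¬ f (u k) = f t := fun k => hu0ne (k + N)
    have hut : Tendsto u atTop (nhds t) :=
      (hu0.mono_right nhdsWithin_le_nhds).comp (tendsto_add_atTop_nat N)
    have hex : ∀ k : ℕ, ∃ w : Fin n → ℂ, (P (u k)).roots = Multiset.map w Finset.univ.val :=
      fun k => aux_exists_tuple _ (hPcard (u k))
    choose w hw using hex
    have hwU : ∀ k i, w k i ∈ U := by
      intro k i
      refine hnoroot (u k) (huIcc k) _ ?_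
      rw [hw k]
      exact Multiset.mem_map.2 ⟨i, by simp, rfl⟩
    have hK : IsCompact (Set.univ.pi (fun _ : Fin n => U)) := isCompact_univ_pi fun _ => hUcomp
    have hwK : ∀ k, w k ∈ Set.univ.pi (fun _ : Fin n => U) := fun k => by
      rw [Set.mem_univ_pi]; exact fun i => hwU k i
    obtain ⟨v, hvK, φ, hφ, hconv⟩ := hK.tendsto_subseq hwK
    have hvU : ∀ i, v i ∈ U := by rw [Set.mem_univ_pi] at hvK; exact hvK
    have hconv_i : ∀ i, Tendsto (fun k => w (φ k) i) atTop (nhds (v i)) :=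
      fun i => tendsto_pi_nhds.1 hconv i
    have huφ : Tendsto (fun k => u (φ k)) atTop (nhds t) := hut.comp hφ.tendsto_atTop
    have hPs_eval : ∀ (k : ℕ) (x : ℂ), (P (u k)).eval x = a * ∏ i, (x - w k i) := by
      intro k x
      have h1 : P (u k) = Polynomial.C a * ∏ i, (X - Polynomial.C (w k i)) := by
        have h2 := C_leadingCoeff_mul_prod_multiset_X_sub_C
          (p := P (u k)) (by rw [hPcard (u k), natDegree_eq_of_degree_eq_some (hPdeg (u k))])
        rw [hPlead (u k), hw k, Multiset.map_map] at h2
        rw [← h2]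
        congr 1
      rw [h1, eval_mul, eval_C, eval_prod]
      simp
    have hPt_eval : ∀ x : ℂ, (P t).eval x = a * ∏ i, (x - v i) := by
      intro x
      have lim1 : Tendsto (fun k => (P (u (φ k))).eval x) atTop (nhds ((P t).eval x)) := by
        have hs : ∀ s : ℝ, (P s).eval x = A.eval x + (s : ℂ) * B.eval x := by
          intro s; rw [hP_def]; simp [eval_add, eval_mul]
        simp only [hs]
        exact tendsto_const_nhds.add
          (((Complex.continuous_ofReal.tendsto t).comp huφ).mul tendsto_const_nhds)
      have lim2 : Tendsto (fun k => (P (u (φ k))).eval x) atTop (nhds (a * ∏ i, (x - v i))) := by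
        simp only [fun k => hPs_eval (φ k) x]
        exact tendsto_const_nhds.mul
          (tendsto_finset_prod _ fun i _ => tendsto_const_nhds.sub (hconv_i i))
      exact tendsto_nhds_unique lim1 lim2
    have hPt : P t = Polynomial.C a * ∏ i, (X - Polynomial.C (v i)) := by
      apply Polynomial.funext
      intro x
      rw [hPt_eval x, eval_mul, eval_C, eval_prod]
      simp
    have hroots_t : (P t).roots = Multiset.map v Finset.univ.val := by
      rw [hPt]; exact aux_roots_eq ha v
    have hft : f t = (Finset.univ.filter (fun i => v i ∈ C)).card := by
      show Multiset.card ((P t).roots.filter (fun w => w ∈ C)) = _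
      rw [hroots_t, aux_card_filter]
    have hEv : ∀ᶠ k in atTop, ∀ i, (w (φ k) i ∈ C ↔ v i ∈ C) := by
      rw [eventually_all]
      intro i
      by_cases hvi : v i ∈ C
      · have hop : IsOpen (U \ C)ᶜ := hWclosed.isOpen_compl
        have hmemi : v i ∈ (U \ C)ᶜ := fun hmem => hmem.2 hvi
        filter_upwards [(hconv_i i).eventually (hop.eventually_mem hmemi)] with k hk
        simp only [hvi, iff_true]
        by_contra hc
        exact hk ⟨hwU (φ k) i, hc⟩
      · have hop : IsOpen Cᶜ := hCclosed.isOpen_compl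
        filter_upwards [(hconv_i i).eventually (hop.eventually_mem hvi)] with k hk
        simp only [hvi, iff_false]
        exact hk
    have hfinal : ∀ᶠ k in atTop, f (u (φ k)) = f t := by
      filter_upwards [hEv] with k hk
      show Multiset.card ((P (u (φ k))).roots.filter (fun w => w ∈ C)) = f t
      rw [hw (φ k), aux_card_filter, hft]
      congr 1
      exact Finset.filter_congr fun i _ => by rw [hk i]
    obtain ⟨k, hk⟩ := hfinal.exists
    exact hune (φ k) hk
  have hconst : f 1 = f 0 := by
    haveI : PreconnectedSpace (Set.Icc (0:ℝ) 1) :=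
      Subtype.preconnectedSpace isPreconnected_Icc
    have hF : IsLocallyConstant (fun x : Set.Icc (0:ℝ) 1 => f x) := by
      rw [IsLocallyConstant.iff_eventually_eq]
      intro x
      have := hloc x.1 x.2
      rw [← map_nhds_subtype_val] at this
      exact eventually_map.1 this
    exact hF.apply_eq_of_preconnectedSpace ⟨1, by norm_num⟩ ⟨0, by norm_num⟩
  have : (g.roots.filter (fun w => w ∈ C)).card = f 1 := by rw [hgP1]
  rw [this, hconst, hf0]
end
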